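/- For every integer m ≥ 1 there is a compact set K ⊂ ℝ and jets F, G, H of order m on K such that: (1) F, G, and H are Whitney fields of class C^m on K; (2) condition (★) holds; yet there is no C^m horizontal curve (f,g,h): ℝ → ℍ¹ extending the triple (F,G,H). -/

import Mathlib

set_option maxHeartbeats 1000000


open Set MeasureTheory intervalIntegral

/-- The Taylor polynomial of order `m` of the jet `F` at `a`. -/
noncomputable def TP (m : ℕ) (F : ℕ → ℝ → ℝ) (a x : ℝ) : ℝ :=
  ∑ k ∈ Finset.range (m + 1), F k a * (x - a) ^ k / (Nat.factorial k : ℝ)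

/-- A jet of order `m` on `K`: a collection of continuous functions on `K`. -/
def IsJet (m : ℕ) (K : Set ℝ) (F : ℕ → ℝ → ℝ) : Prop :=
  ∀ k ≤ m, ContinuousOn (F k) K

/-- A Whitney field of class `C^m` on `K`. -/
def IsWhitneyField (m : ℕ) (K : Set ℝ) (F : ℕ → ℝ → ℝ) : Prop :=
  ∀ k ≤ m, ∀ ε > (0 : ℝ), ∃ δ > (0 : ℝ), ∀ a ∈ K, ∀ b ∈ K, |b - a| < δ →
    |F k b - ∑ l ∈ Finset.range (m - k + 1), F (k + l) a * (b - a) ^ l / (Nat.factorial l : ℝ)|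
      ≤ ε * |b - a| ^ (m - k)

/-- Condition (★). -/
def StarCond (m : ℕ) (K : Set ℝ) (F G H : ℕ → ℝ → ℝ) : Prop :=
  ∀ k, 1 ≤ k → k ≤ m → ∀ t ∈ K,
    H k t = 2 * ∑ j ∈ Finset.range k, (Nat.choose (k - 1) j : ℝ) *
      (F (k - j) t * G j t - G (k - j) t * F j t)

/-- The area discrepancy `A(a,b)`. -/
noncomputable def areaA (m : ℕ) (F G H : ℕ → ℝ → ℝ) (a b : ℝ) : ℝ :=
  H 0 b - H 0 a
    - 2 * ∫ x in a..b, (deriv (TP m F a) x * TP m G a x - deriv (TP m G a) x * TP m F a x)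
    + 2 * F 0 a * (G 0 b - TP m G a b) - 2 * G 0 a * (F 0 b - TP m F a b)

/-- The velocity `V(a,b)`. -/
noncomputable def velV (m : ℕ) (F G : ℕ → ℝ → ℝ) (a b : ℝ) : ℝ :=
  (b - a) ^ (2 * m) + (b - a) ^ m *
    ∫ x in a..b, (|deriv (TP m F a) x| + |deriv (TP m G a) x|)

/-- `A(a,b)/V(a,b) → 0` uniformly as `(b-a) ↘ 0` with `a, b ∈ K`. -/
def UniformAV (m : ℕ) (K : Set ℝ) (F G H : ℕ → ℝ → ℝ) : Prop :=
  ∀ ε > (0 : ℝ), ∃ δ > (0 : ℝ), ∀ a ∈ K, ∀ b ∈ K, 0 < b - a → b - a < δ →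
    |areaA m F G H a b| ≤ ε * velV m F G a b

/-- A horizontal curve in the first Heisenberg group. -/
def IsHorizontal (f g h : ℝ → ℝ) : Prop :=
  ∀ t, deriv h t = 2 * (deriv f t * g t - deriv g t * f t)

/-- The triple of jets `(F, G, H)` extends to the curve `(f, g, h)`. -/
def ExtendsJets (m : ℕ) (K : Set ℝ) (F G H : ℕ → ℝ → ℝ) (f g h : ℝ → ℝ) : Prop :=
  ∀ x ∈ K, ∀ k ≤ m, iteratedDeriv k f x = F k x ∧ iteratedDeriv k g x = G k x ∧
    iteratedDeriv k h x = H k x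

namespace AreaCounterexample

/-- The compact set `{0} ∪ {2⁻ⁿ}`. -/
def Kset : Set ℝ := insert 0 (Set.range fun n : ℕ => ((2 : ℝ)⁻¹) ^ n)

lemma mem_nonneg {x : ℝ} (hx : x ∈ Kset) : 0 ≤ x := by
  rcases hx with rfl | ⟨n, rfl⟩
  · exact le_refl 0
  · exact pow_nonneg (by norm_num) n

lemma key_half {a b : ℝ} (ha : a ∈ Kset) (hb : b ∈ Kset) (hab : a < b) : 2 * a ≤ b := by
  rcases hb with rfl | ⟨n, rfl⟩
  · linarith [mem_nonneg ha]
  rcases ha with rfl | ⟨p, rfl⟩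
  · simp only [mul_zero]; exact pow_nonneg (by norm_num) n
  · have hnp : n < p :=
      (pow_lt_pow_iff_right_of_lt_one₀ (by norm_num) (by norm_num)).mp hab
    have : ((2:ℝ)⁻¹) ^ p ≤ ((2:ℝ)⁻¹) ^ (n + 1) :=
      pow_le_pow_of_le_one (by norm_num) (by norm_num) hnp
    calc 2 * ((2:ℝ)⁻¹) ^ p ≤ 2 * ((2:ℝ)⁻¹) ^ (n+1) := by linarith
      _ = ((2:ℝ)⁻¹) ^ n := by ring

lemma key_abs {m : ℕ} {a b : ℝ} (ha : a ∈ Kset) (hb : b ∈ Kset) :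
    |b ^ (2*m) - a ^ (2*m)| ≤ (2 * |b - a|) ^ (2*m) := by
  have ha0 := mem_nonneg ha
  have hb0 := mem_nonneg hb
  rcases lt_trichotomy a b with h | h | h
  · have h2 : b ≤ 2 * (b - a) := by have := key_half ha hb h; linarith
    have hpow : b ^ (2*m) - a ^ (2*m) ≤ (2 * (b - a)) ^ (2*m) := by
      have h1 : b ^ (2*m) ≤ (2*(b-a)) ^ (2*m) := pow_le_pow_left₀ hb0 h2 _
      have h3 : 0 ≤ a ^ (2*m) := by positivity
      linarith
    have habs : |b - a| = b - a := abs_of_pos (by linarith)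
    rw [habs, abs_of_nonneg]
    · exact hpow
    · have := pow_le_pow_left₀ ha0 h.le (2*m); linarith
  · simp [h]
  · have h2 : a ≤ 2 * (a - b) := by have := key_half hb ha h; linarith
    have hpow : a ^ (2*m) - b ^ (2*m) ≤ (2 * (a - b)) ^ (2*m) := by
      have h1 : a ^ (2*m) ≤ (2*(a-b)) ^ (2*m) := pow_le_pow_left₀ ha0 h2 _
      have h3 : 0 ≤ b ^ (2*m) := by positivity
      linarith
    have habs : |b - a| = a - b := by rw [abs_sub_comm]; exact abs_of_pos (by linarith)
    rw [habs, abs_sub_comm, abs_of_nonneg]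
    · exact hpow
    · have := pow_le_pow_left₀ hb0 h.le (2*m); linarith

/-- Taylor-type estimate: if all derivatives up to order `m` of `f` vanish at `a` and the
`m`-th derivative is bounded by `C` on `[a,b]`, then the `(m-j)`-th derivative is bounded
by `C (b-a)^j` on `[a,b]`. -/
lemma taylor_bound {m : ℕ} {f : ℝ → ℝ} (hf : ContDiff ℝ (m : ℕ∞) f) {a b C : ℝ}
    (hab : a ≤ b) (hC : 0 ≤ C)
    (hz : ∀ k ≤ m, iteratedDeriv k f a = 0)
    (hmb : ∀ x ∈ Set.Icc a b, |iteratedDeriv m f x| ≤ C) :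
    ∀ j ≤ m, ∀ x ∈ Set.Icc a b, |iteratedDeriv (m - j) f x| ≤ C * (b - a) ^ j := by
  intro j
  induction j with
  | zero => intro _ x hx; simpa using hmb x hx
  | succ j ih =>
    intro hj x hx
    have hj' : j ≤ m := by omega
    have hlt : m - (j+1) < m := by omega
    have hsucc : (m - (j+1)) + 1 = m - j := by omega
    have hdiff : Differentiable ℝ (iteratedDeriv (m - (j+1)) f) :=
      hf.differentiable_iteratedDeriv _ (Nat.cast_lt.mpr hlt)
    have hder : ∀ y ∈ Set.Icc a b, HasDerivWithinAt (iteratedDeriv (m - (j+1)) f)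
        (iteratedDeriv (m - j) f y) (Set.Icc a b) y := by
      intro y _
      have h1 : HasDerivAt (iteratedDeriv (m - (j+1)) f)
          (deriv (iteratedDeriv (m - (j+1)) f) y) y := (hdiff y).hasDerivAt
      have h2 : iteratedDeriv (m - j) f = deriv (iteratedDeriv (m - (j+1)) f) := by
        rw [← hsucc, iteratedDeriv_succ]
      rw [h2]
      exact h1.hasDerivWithinAt
    have bound : ∀ y ∈ Set.Icc a b, ‖iteratedDeriv (m - j) f y‖ ≤ C * (b - a) ^ j := by
      intro y hy
      rw [Real.norm_eq_abs]
      exact ih hj' y hy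
    have hmain := Convex.norm_image_sub_le_of_norm_hasDerivWithin_le hder bound
      (convex_Icc a b) (Set.left_mem_Icc.mpr hab) hx
    have hz' : iteratedDeriv (m - (j+1)) f a = 0 := hz _ (Nat.sub_le _ _)
    rw [hz', sub_zero, Real.norm_eq_abs, Real.norm_eq_abs] at hmain
    have hx1 : |x - a| ≤ b - a := by
      rw [abs_of_nonneg (by linarith [hx.1])]
      linarith [hx.2]
    calc |iteratedDeriv (m - (j+1)) f x| ≤ C * (b - a) ^ j * |x - a| := hmain
      _ ≤ C * (b - a) ^ j * (b - a) := by
          exact mul_le_mul_of_nonneg_left hx1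
            (mul_nonneg hC (pow_nonneg (by linarith) j))
      _ = C * (b - a) ^ (j + 1) := by ring

end AreaCounterexample

open AreaCounterexample in
/-- Proposition 4.1: for every `m ≥ 1` there are a compact set `K ⊆ ℝ` and
jets `F, G, H` of order `m` on `K` which are Whitney fields of class `C^m` and satisfy
condition (★), yet no `C^m` horizontal curve `(f,g,h) : ℝ → ℍ¹` extends the triple `(F,G,H)`. -/
theorem importance_of_area_condition (m : ℕ) (hm : 1 ≤ m) :
    ∃ (K : Set ℝ) (F G H : ℕ → ℝ → ℝ),
      IsCompact K ∧ IsJet m K F ∧ IsJet m K G ∧ IsJet m K H ∧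
      IsWhitneyField m K F ∧ IsWhitneyField m K G ∧ IsWhitneyField m K H ∧
      StarCond m K F G H ∧
      ¬ ∃ f g h : ℝ → ℝ, ContDiff ℝ (m : ℕ∞) f ∧ ContDiff ℝ (m : ℕ∞) g ∧
          ContDiff ℝ (m : ℕ∞) h ∧ IsHorizontal f g h ∧ ExtendsJets m K F G H f g h := by
  classical
  refine ⟨Kset, (fun _ _ => 0), (fun _ _ => 0),
    (fun k t => if k = 0 then t ^ (2*m) else 0), ?_, ?_, ?_, ?_, ?_, ?_, ?_, ?_, ?_⟩
  · -- compactness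
    have : Filter.Tendsto (fun n : ℕ => ((2:ℝ)⁻¹) ^ n) Filter.atTop (nhds 0) :=
      tendsto_pow_atTop_nhds_zero_of_lt_one (by norm_num) (by norm_num)
    exact this.isCompact_insert_range
  · intro k _; exact continuousOn_const
  · intro k _; exact continuousOn_const
  · intro k _
    by_cases hk : k = 0
    · simp only [hk, if_pos rfl]
      exact (continuous_pow _).continuousOn
    · simp only [if_neg hk]; exact continuousOn_const
  · -- Whitney field F = 0
    intro k _ ε hε
    refine ⟨1, one_pos, fun a _ b _ _ => ?_⟩
    simp only [zero_mul, zero_div, Finset.sum_const_zero, sub_zero, abs_zero]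
    positivity
  · intro k _ ε hε
    refine ⟨1, one_pos, fun a _ b _ _ => ?_⟩
    simp only [zero_mul, zero_div, Finset.sum_const_zero, sub_zero, abs_zero]
    positivity
  · -- Whitney field for H
    intro k hk ε hε
    by_cases hk0 : k = 0
    · subst hk0
      refine ⟨min 1 (ε / 4 ^ m), lt_min one_pos (by positivity), fun a ha b hb hab => ?_⟩
      have hsum : ∑ l ∈ Finset.range (m - 0 + 1),
          (if 0 + l = 0 then a ^ (2*m) else 0) * (b - a) ^ l / (Nat.factorial l : ℝ)
          = a ^ (2*m) := by
        rw [Finset.sum_eq_single 0]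
        · simp
        · intro l _ hl; simp [Nat.add_eq_zero, hl]
        · intro h; exact absurd (Finset.mem_range.mpr (Nat.succ_pos _)) h
      simp only [if_pos rfl]
      rw [hsum]
      have hkey := key_abs (m := m) ha hb
      have hd1 : |b - a| < 1 := lt_of_lt_of_le hab (min_le_left _ _)
      have hd2 : |b - a| < ε / 4 ^ m := lt_of_lt_of_le hab (min_le_right _ _)
      have habs0 : (0:ℝ) ≤ |b - a| := abs_nonneg _
      have hpm : |b - a| ^ m ≤ |b - a| := by
        calc |b - a| ^ m ≤ |b - a| ^ 1 :=
          pow_le_pow_of_le_one habs0 hd1.le hm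
        _ = |b - a| := pow_one _
      calc |b ^ (2*m) - a ^ (2*m)| ≤ (2 * |b - a|) ^ (2*m) := hkey
        _ = 4 ^ m * (|b - a| ^ m * |b - a| ^ m) := by
            rw [mul_pow, show ((2:ℝ)) ^ (2*m) = 4 ^ m by rw [pow_mul]; norm_num,
              two_mul, pow_add]
        _ ≤ 4 ^ m * ((ε / 4 ^ m) * |b - a| ^ m) := by
            have h1 : |b - a| ^ m ≤ ε / 4 ^ m := le_trans hpm hd2.le
            have h2 : (0:ℝ) ≤ |b - a| ^ m := by positivity
            have := mul_le_mul_of_nonneg_right h1 h2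
            nlinarith [pow_pos (show (0:ℝ) < 4 by norm_num) m]
        _ = ε * |b - a| ^ m := by
            field_simp
        _ = ε * |b - a| ^ (m - 0) := by rw [Nat.sub_zero]
    · refine ⟨1, one_pos, fun a _ b _ _ => ?_⟩
      have hsum : ∑ l ∈ Finset.range (m - k + 1),
          (if k + l = 0 then a ^ (2*m) else 0) * (b - a) ^ l / (Nat.factorial l : ℝ) = 0 := by
        apply Finset.sum_eq_zero
        intro l _
        have : k + l ≠ 0 := by omega
        rw [if_neg this]; simp
      simp only [if_neg hk0]
      rw [hsum]
      simp only [sub_zero, abs_zero]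
      positivity
  · -- StarCond
    intro k hk1 _ t _
    have hk0 : k ≠ 0 := by omega
    simp [hk0]
  · -- no extension
    rintro ⟨f, g, h, hfC, hgC, hhC, hhor, hext⟩
    -- the m-th derivatives of f, g vanish at 0 and are continuous
    have h0K : (0:ℝ) ∈ Kset := Set.mem_insert 0 _
    have hfm0 : iteratedDeriv m f 0 = 0 := (hext 0 h0K m le_rfl).1
    have hgm0 : iteratedDeriv m g 0 = 0 := (hext 0 h0K m le_rfl).2.1
    have hfmc : Continuous (iteratedDeriv m f) := hfC.continuous_iteratedDeriv m (by exact_mod_cast le_rfl)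
    have hgmc : Continuous (iteratedDeriv m g) := hgC.continuous_iteratedDeriv m (by exact_mod_cast le_rfl)
    -- get δ > 0 with both m-th derivatives ≤ 1/4 on (-δ, δ)
    obtain ⟨δf, hδf, hf4⟩ := Metric.continuousAt_iff.mp hfmc.continuousAt (ε := 1/4) (by norm_num)
    obtain ⟨δg, hδg, hg4⟩ := Metric.continuousAt_iff.mp hgmc.continuousAt (ε := 1/4) (by norm_num)
    set δ := min δf δg with hδdef
    have hδ : 0 < δ := lt_min hδf hδg
    obtain ⟨n, hn⟩ := exists_pow_lt_of_lt_one hδ (show (2:ℝ)⁻¹ < 1 by norm_num)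
    -- the interval [a, b]
    set b : ℝ := ((2:ℝ)⁻¹) ^ n with hbdef
    set a : ℝ := ((2:ℝ)⁻¹) ^ (n+1) with hadef
    have haK : a ∈ Kset := Set.mem_insert_of_mem _ ⟨n+1, rfl⟩
    have hbK : b ∈ Kset := Set.mem_insert_of_mem _ ⟨n, rfl⟩
    have hb_pos : 0 < b := by positivity
    have ha_eq : a = b / 2 := by
      rw [hadef, hbdef, pow_succ]; ring
    have hab : a < b := by rw [ha_eq]; linarith
    have hbδ : b < δ := hn
    -- bound on m-th derivatives on [a,b]
    have hxδ : ∀ x ∈ Set.Icc a b, dist x 0 < δ := by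
      intro x hx
      rw [Real.dist_eq, sub_zero, abs_of_nonneg (le_trans (by positivity) hx.1)]
      exact lt_of_le_of_lt hx.2 hbδ
    have hfb : ∀ x ∈ Set.Icc a b, |iteratedDeriv m f x| ≤ 1/4 := by
      intro x hx
      have := hf4 (lt_of_lt_of_le (hxδ x hx) (min_le_left _ _))
      rw [Real.dist_eq, hfm0, sub_zero] at this
      exact this.le
    have hgb : ∀ x ∈ Set.Icc a b, |iteratedDeriv m g x| ≤ 1/4 := by
      intro x hx
      have := hg4 (lt_of_lt_of_le (hxδ x hx) (min_le_right _ _))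
      rw [Real.dist_eq, hgm0, sub_zero] at this
      exact this.le
    -- all derivatives of f, g up to m vanish at a
    have hfz : ∀ k ≤ m, iteratedDeriv k f a = 0 := fun k hk => (hext a haK k hk).1
    have hgz : ∀ k ≤ m, iteratedDeriv k g a = 0 := fun k hk => (hext a haK k hk).2.1
    set L : ℝ := b - a with hLdef
    have hL : 0 < L := by simp only [hLdef]; linarith
    -- Taylor bounds
    have hfT := taylor_bound hfC hab.le (by norm_num) hfz hfb
    have hgT := taylor_bound hgC hab.le (by norm_num) hgz hgb
    -- bounds on f, f', g, g' on [a,b]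
    have hf0 : ∀ x ∈ Set.Icc a b, |f x| ≤ (1/4) * L ^ m := by
      intro x hx
      have := hfT m le_rfl x hx
      simpa using this
    have hg0 : ∀ x ∈ Set.Icc a b, |g x| ≤ (1/4) * L ^ m := by
      intro x hx
      have := hgT m le_rfl x hx
      simpa using this
    have hf1 : ∀ x ∈ Set.Icc a b, |deriv f x| ≤ (1/4) * L ^ (m-1) := by
      intro x hx
      have := hfT (m-1) (Nat.sub_le _ _) x hx
      have hme : m - (m - 1) = 1 := by omega
      rw [hme, iteratedDeriv_one] at this
      exact this
    have hg1 : ∀ x ∈ Set.Icc a b, |deriv g x| ≤ (1/4) * L ^ (m-1) := by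
      intro x hx
      have := hgT (m-1) (Nat.sub_le _ _) x hx
      have hme : m - (m - 1) = 1 := by omega
      rw [hme, iteratedDeriv_one] at this
      exact this
    -- h is differentiable and its derivative is bounded on [a,b]
    have hhd : Differentiable ℝ h := hhC.differentiable (by exact_mod_cast (Nat.one_le_iff_ne_zero.mp hm))
    have hLmm : L ^ (m-1) * L ^ m = L ^ (2*m - 1) := by
      rw [← pow_add]; congr 1; omega
    have hderbound : ∀ x ∈ Set.Icc a b, ‖deriv h x‖ ≤ (1/4) * L ^ (2*m - 1) := by
      intro x hx
      rw [Real.norm_eq_abs, hhor x]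
      have h1 := hf1 x hx
      have h2 := hg0 x hx
      have h3 := hg1 x hx
      have h4 := hf0 x hx
      have e1 : |deriv f x * g x| ≤ (1/4) * L ^ (m-1) * ((1/4) * L ^ m) := by
        rw [abs_mul]
        exact mul_le_mul h1 h2 (abs_nonneg _) (by positivity)
      have e2 : |deriv g x * f x| ≤ (1/4) * L ^ (m-1) * ((1/4) * L ^ m) := by
        rw [abs_mul]
        exact mul_le_mul h3 h4 (abs_nonneg _) (by positivity)
      have := abs_sub (deriv f x * g x) (deriv g x * f x)
      calc |2 * (deriv f x * g x - deriv g x * f x)|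
          = 2 * |deriv f x * g x - deriv g x * f x| := by
            rw [abs_mul]; norm_num
        _ ≤ 2 * (|deriv f x * g x| + |deriv g x * f x|) := by
            have := abs_sub_abs_le_abs_sub (deriv f x * g x) (deriv g x * f x)
            have h5 := abs_sub (deriv f x * g x) (deriv g x * f x)
            nlinarith [abs_sub_le_iff.mp (le_refl |deriv f x * g x - deriv g x * f x|),
              abs_sub (deriv f x * g x) (deriv g x * f x)]
        _ ≤ 2 * ((1/4) * L ^ (m-1) * ((1/4) * L ^ m) + (1/4) * L ^ (m-1) * ((1/4) * L ^ m)) := by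
            linarith
        _ = (1/4) * (L ^ (m-1) * L ^ m) := by ring
        _ = (1/4) * L ^ (2*m - 1) := by rw [hLmm]
    -- mean value estimate for h
    have hhder : ∀ y ∈ Set.Icc a b, HasDerivWithinAt h (deriv h y) (Set.Icc a b) y :=
      fun y _ => (hhd y).hasDerivAt.hasDerivWithinAt
    have hmain := Convex.norm_image_sub_le_of_norm_hasDerivWithin_le hhder hderbound
      (convex_Icc a b) (Set.left_mem_Icc.mpr hab.le) (Set.right_mem_Icc.mpr hab.le)
    rw [Real.norm_eq_abs, Real.norm_eq_abs] at hmain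
    have hba : |b - a| = L := abs_of_pos hL
    rw [hba] at hmain
    have hhb : h b = b ^ (2*m) := by
      have := (hext b hbK 0 (Nat.zero_le _)).2.2
      simpa using this
    have hha : h a = a ^ (2*m) := by
      have := (hext a haK 0 (Nat.zero_le _)).2.2
      simpa using this
    rw [hhb, hha] at hmain
    -- contradiction: b^{2m} - a^{2m} is too large
    have hL2 : L = b / 2 := by rw [hLdef, ha_eq]; ring
    have hab2m : b ^ (2*m) - a ^ (2*m) ≥ (1/2) * b ^ (2*m) := by
      have ha2 : a ^ (2*m) = b ^ (2*m) * ((2:ℝ)⁻¹) ^ (2*m) := by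
        rw [ha_eq, div_pow, inv_pow, div_eq_mul_inv]
      have h14 : ((2:ℝ)⁻¹) ^ (2*m) ≤ 1/2 := by
        calc ((2:ℝ)⁻¹) ^ (2*m) ≤ ((2:ℝ)⁻¹) ^ 1 :=
          pow_le_pow_of_le_one (by norm_num) (by norm_num) (by omega)
        _ = 1/2 := by norm_num
      have hbp : (0:ℝ) < b ^ (2*m) := by positivity
      rw [ha2]
      nlinarith
    have hL2m : L ^ (2*m - 1) * L = L ^ (2*m) := by
      rw [← pow_succ]; congr 1; omega
    have hup : |b ^ (2*m) - a ^ (2*m)| ≤ (1/4) * L ^ (2*m) := by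
      calc |b ^ (2*m) - a ^ (2*m)| ≤ (1/4) * L ^ (2*m-1) * L := hmain
        _ = (1/4) * L ^ (2*m) := by rw [mul_assoc, hL2m]
    have hlow : b ^ (2*m) - a ^ (2*m) ≤ |b ^ (2*m) - a ^ (2*m)| := le_abs_self _
    -- b = 2L, so b^{2m} = 2^{2m} L^{2m} ≥ 4 L^{2m}
    have hb2L : b = 2 * L := by rw [hL2]; ring
    have hb2m : b ^ (2*m) = 2 ^ (2*m) * L ^ (2*m) := by
      rw [hb2L, mul_pow]
    have h4le : (4:ℝ) ≤ 2 ^ (2*m) := by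
      calc (4:ℝ) = 2 ^ 2 := by norm_num
      _ ≤ 2 ^ (2*m) := pow_le_pow_right₀ (by norm_num) (by omega)
    have hLpos : (0:ℝ) < L ^ (2*m) := pow_pos hL _
    rw [hb2m] at hab2m
    have h6 : (4:ℝ) * L ^ (2*m) ≤ 2 ^ (2*m) * L ^ (2*m) :=
      mul_le_mul_of_nonneg_right h4le hLpos.le
    linarith
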